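/- Let G be a finite group and let k be a positive integer. Let u_1^0, u_1^1, u_2^0, u_2^1, …, u_k^0, u_k^1 be chosen uniformly and independently at random from G, and for ε ∈ {0,1}^k let s(ε) = u_1^{ε_1} u_2^{ε_2} ⋯ u_k^{ε_k}. Then for any two distinct ε, η ∈ {0,1}^k, the pair (s(ε), s(η)) is uniformly distributed on G², i.e. for every (g,h) ∈ G², Pr[s(ε) = g and s(η) = h] = 1/|G|². -/

import Mathlib

open Finset

namespace Stmt16Aux

variable {G : Type*} [Group G] {k : ℕ}

/-- prefix product before index `j` -/
def pre (σ : Fin k → Bool) (j : Fin k) (u : Fin k → Bool → G) : G :=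
  ((List.ofFn fun i : Fin k => u i (σ i)).take j).prod

/-- suffix product after index `j` -/
def suf (σ : Fin k → Bool) (j : Fin k) (u : Fin k → Bool → G) : G :=
  ((List.ofFn fun i : Fin k => u i (σ i)).drop (j + 1)).prod

lemma prod_split (σ : Fin k → Bool) (j : Fin k) (u : Fin k → Bool → G) :
    (List.ofFn fun i : Fin k => u i (σ i)).prod = pre σ j u * u j (σ j) * suf σ j u := by
  have hlen : (j : ℕ) < (List.ofFn fun i : Fin k => u i (σ i)).length := by
    simp [j.isLt]
  rw [pre, suf,
    ← List.prod_take_mul_prod_drop (List.ofFn fun i : Fin k => u i (σ i)) ((j : ℕ) + 1),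
    List.prod_take_succ _ _ hlen]
  simp

lemma pre_congr (σ : Fin k → Bool) (j : Fin k) (u v : Fin k → Bool → G)
    (h : ∀ i : Fin k, i ≠ j → u i (σ i) = v i (σ i)) : pre σ j u = pre σ j v := by
  unfold pre
  congr 1
  apply List.ext_getElem (by simp)
  intro n h1 h2
  have hn : n < k := by
    simp only [List.length_take, List.length_ofFn, lt_min_iff] at h1
    exact h1.2
  have hnj : n < (j : ℕ) := by
    simp only [List.length_take, List.length_ofFn, lt_min_iff] at h1
    exact h1.1
  rw [List.getElem_take, List.getElem_take, List.getElem_ofFn, List.getElem_ofFn]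
  exact h ⟨n, hn⟩ (Fin.ne_of_val_ne (Nat.ne_of_lt hnj))

lemma suf_congr (σ : Fin k → Bool) (j : Fin k) (u v : Fin k → Bool → G)
    (h : ∀ i : Fin k, i ≠ j → u i (σ i) = v i (σ i)) : suf σ j u = suf σ j v := by
  unfold suf
  congr 1
  apply List.ext_getElem (by simp)
  intro n h1 h2
  have hn : n + ((j : ℕ) + 1) < k := by
    simp only [List.length_drop, List.length_ofFn] at h1
    omega
  rw [List.getElem_drop, List.getElem_drop, List.getElem_ofFn, List.getElem_ofFn]
  exact h ⟨(j : ℕ) + 1 + n, by omega⟩ (Fin.ne_of_val_ne (by simp only [Fin.val_mk]; omega))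

/-- the rebalancing map: change the two coordinates `u j (ε j)` and `u j (η j)` so that the
two products become `g` and `h` respectively. -/
def Φ (ε η : Fin k → Bool) (j : Fin k) (g h : G) (u : Fin k → Bool → G) :
    Fin k → Bool → G :=
  fun i b =>
    if i = j then
      (if b = ε j then (pre ε j u)⁻¹ * g * (suf ε j u)⁻¹
       else (pre η j u)⁻¹ * h * (suf η j u)⁻¹)
    else u i b

lemma Φ_apply_ne (ε η : Fin k → Bool) (j : Fin k) (g h : G) (u : Fin k → Bool → G)
    {i : Fin k} (hi : i ≠ j) (b : Bool) : Φ ε η j g h u i b = u i b := by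
  simp [Φ, hi]

lemma pre_Φ (σ ε η : Fin k → Bool) (j : Fin k) (g h : G) (u : Fin k → Bool → G) :
    pre σ j (Φ ε η j g h u) = pre σ j u :=
  pre_congr _ _ _ _ fun i hi => Φ_apply_ne ε η j g h u hi _

lemma suf_Φ (σ ε η : Fin k → Bool) (j : Fin k) (g h : G) (u : Fin k → Bool → G) :
    suf σ j (Φ ε η j g h u) = suf σ j u :=
  suf_congr _ _ _ _ fun i hi => Φ_apply_ne ε η j g h u hi _

lemma Φ_apply_ε (ε η : Fin k → Bool) (j : Fin k) (g h : G) (u : Fin k → Bool → G) :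
    Φ ε η j g h u j (ε j) = (pre ε j u)⁻¹ * g * (suf ε j u)⁻¹ := by simp [Φ]

lemma Φ_apply_η (ε η : Fin k → Bool) (j : Fin k) (hj : ε j ≠ η j) (g h : G)
    (u : Fin k → Bool → G) :
    Φ ε η j g h u j (η j) = (pre η j u)⁻¹ * h * (suf η j u)⁻¹ := by
  simp [Φ, Ne.symm hj]

lemma prod_Φ_ε (ε η : Fin k → Bool) (j : Fin k) (g h : G) (u : Fin k → Bool → G) :
    (List.ofFn fun i : Fin k => Φ ε η j g h u i (ε i)).prod = g := by
  rw [prod_split ε j, pre_Φ, suf_Φ]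
  have : Φ ε η j g h u j (ε j) = (pre ε j u)⁻¹ * g * (suf ε j u)⁻¹ := by simp [Φ]
  rw [this]
  group

lemma prod_Φ_η (ε η : Fin k → Bool) (j : Fin k) (hj : ε j ≠ η j) (g h : G)
    (u : Fin k → Bool → G) :
    (List.ofFn fun i : Fin k => Φ ε η j g h u i (η i)).prod = h := by
  rw [prod_split η j, pre_Φ, suf_Φ]
  have : Φ ε η j g h u j (η j) = (pre η j u)⁻¹ * h * (suf η j u)⁻¹ := by
    simp [Φ, (Ne.symm hj)]
  rw [this]
  group

lemma Φ_inv (ε η : Fin k → Bool) (j : Fin k) (hj : ε j ≠ η j) (g h g' h' : G)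
    (u : Fin k → Bool → G)
    (hu1 : (List.ofFn fun i : Fin k => u i (ε i)).prod = g)
    (hu2 : (List.ofFn fun i : Fin k => u i (η i)).prod = h) :
    Φ ε η j g h (Φ ε η j g' h' u) = u := by
  have hue : (pre ε j u)⁻¹ * g * (suf ε j u)⁻¹ = u j (ε j) := by
    rw [← hu1, prod_split ε j u]; group
  have huη : (pre η j u)⁻¹ * h * (suf η j u)⁻¹ = u j (η j) := by
    rw [← hu2, prod_split η j u]; group
  funext i b
  by_cases hi : i = j
  · by_cases hb : b = ε j
    · rw [hi, hb, Φ_apply_ε, pre_Φ, suf_Φ]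
      exact hue
    · have hb2 : b = η j := by
        have h1 : b = !(ε j) := Bool.eq_not_of_ne hb
        have h2 : η j = !(ε j) := Bool.eq_not_of_ne (Ne.symm hj)
        rw [h1, h2]
      rw [hi, hb2, Φ_apply_η ε η j hj, pre_Φ, suf_Φ]
      exact huη
  · simp [Φ, hi]

end Stmt16Aux

open Stmt16Aux in
open scoped Classical in
theorem stmt16 {G : Type*} [Group G] [Fintype G]
    (k : ℕ) (hk : 0 < k) (ε η : Fin k → Bool) (hεη : ε ≠ η) (g h : G) :
    ((Finset.univ.filter (fun u : Fin k → Bool → G =>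
        (List.ofFn fun i : Fin k => u i (ε i)).prod = g ∧
        (List.ofFn fun i : Fin k => u i (η i)).prod = h)).card : ℝ) /
      (Fintype.card (Fin k → Bool → G) : ℝ) =
      1 / (Fintype.card G : ℝ) ^ 2 := by
  obtain ⟨j, hj⟩ := Function.ne_iff.mp hεη
  -- all fibers have the same cardinality
  have key : ∀ g' h' : G,
      (Finset.univ.filter (fun u : Fin k → Bool → G =>
        (List.ofFn fun i : Fin k => u i (ε i)).prod = g' ∧
        (List.ofFn fun i : Fin k => u i (η i)).prod = h')).card =
      (Finset.univ.filter (fun u : Fin k → Bool → G =>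
        (List.ofFn fun i : Fin k => u i (ε i)).prod = g ∧
        (List.ofFn fun i : Fin k => u i (η i)).prod = h)).card := by
    intro g' h'
    apply Finset.card_nbij' (Φ ε η j g h) (Φ ε η j g' h')
    · intro u _
      simp only [mem_coe, mem_filter, mem_univ, true_and]
      exact ⟨prod_Φ_ε ε η j g h u, prod_Φ_η ε η j hj g h u⟩
    · intro u _
      simp only [mem_coe, mem_filter, mem_univ, true_and]
      exact ⟨prod_Φ_ε ε η j g' h' u, prod_Φ_η ε η j hj g' h' u⟩
    · intro u hu
      simp only [mem_coe, mem_filter, mem_univ, true_and] at hu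
      exact Φ_inv ε η j hj g' h' g h u hu.1 hu.2
    · intro u hu
      simp only [mem_coe, mem_filter, mem_univ, true_and] at hu
      exact Φ_inv ε η j hj g h g' h' u hu.1 hu.2
  set N : ℕ := (Finset.univ.filter (fun u : Fin k → Bool → G =>
        (List.ofFn fun i : Fin k => u i (ε i)).prod = g ∧
        (List.ofFn fun i : Fin k => u i (η i)).prod = h)).card with hNdef
  have total : Fintype.card (Fin k → Bool → G) = Fintype.card G ^ 2 * N := by
    have h1 : (Finset.univ : Finset (Fin k → Bool → G)).card =
        ∑ p ∈ (Finset.univ : Finset (G × G)),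
          (Finset.univ.filter (fun u : Fin k → Bool → G =>
            ((List.ofFn fun i : Fin k => u i (ε i)).prod,
             (List.ofFn fun i : Fin k => u i (η i)).prod) = p)).card :=
      Finset.card_eq_sum_card_fiberwise (fun _ _ => mem_univ _)
    rw [← Fintype.card, h1] at *
    calc ∑ p ∈ (Finset.univ : Finset (G × G)),
          (Finset.univ.filter (fun u : Fin k → Bool → G =>
            ((List.ofFn fun i : Fin k => u i (ε i)).prod,
             (List.ofFn fun i : Fin k => u i (η i)).prod) = p)).card
        = ∑ _p ∈ (Finset.univ : Finset (G × G)), N := by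
          apply Finset.sum_congr rfl
          intro p _
          rw [← key p.1 p.2]
          congr 1
          apply Finset.filter_congr
          intro u _
          simp [Prod.ext_iff]
      _ = Fintype.card G ^ 2 * N := by
          rw [Finset.sum_const, smul_eq_mul]
          congr 1
          simp [sq, Fintype.card_prod]
  have hGpos : (0 : ℝ) < (Fintype.card G : ℝ) := by
    exact_mod_cast Fintype.card_pos
  have hTpos : 0 < Fintype.card (Fin k → Bool → G) := Fintype.card_pos
  have hNpos : (0 : ℝ) < (N : ℝ) := by
    have : 0 < N := by
      rcases Nat.eq_zero_or_pos N with h0 | h0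
      · rw [h0, Nat.mul_zero] at total
        exact absurd total hTpos.ne'
      · exact h0
    exact_mod_cast this
  rw [total]
  push_cast
  rw [div_eq_div_iff (by positivity) (by positivity)]
  ring
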